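/- Fix an integer m ≥ 2 and k ∈ ℕ. For each n ∈ ℕ with 0 ≤ n < F_k^{(m)}, let r(n) ∈ {0,…,m−1} be the unique integer with ε_{k−1}(n) = ⋯ = ε_{k−r(n)}(n) = 1 and ε_{k−r(n)−1}(n) = 0, set μ_k(n) = Σ_{j=0}^{k−1} ε_{k−1−j}(n) φ_m^j, and let I(n) = [μ_k(n)/φ_m^k, (μ_k(n) + φ_m^{r(n)} − Σ_{i=0}^{r(n)−1} φ_m^i)/φ_m^k). Then the intervals I(n), 0 ≤ n < F_k^{(m)}, are pairwise disjoint and their union equals [0,1); i.e. the collection C_k^{(m)} = {I(n) : 0 ≤ n < F_k^{(m)}} forms a partition of [0,1). -/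

import Mathlib

open MeasureTheory Filter Set

namespace Mbon

/-- The `m`-bonacci sequence `F m`. -/
noncomputable def F (m : ℕ) : ℕ → ℕ := fun k =>
  Nat.strongRecOn k fun k ih =>
    if h : k < m then 2 ^ k
    else ∑ j ∈ (Finset.range m).attach,
      ih (k - (j : ℕ) - 1) (by have := Finset.mem_range.mp j.2; omega)

/-- `ε : ℕ → ℕ` is the (unique) greedy digit string of `n` in the `m`-bonacci
numeration system: digits in `{0,1}`, finitely many nonzero digits, no `m`
consecutive digits all equal to `1`, and the digits represent `n`. -/
def IsGreedy (m n : ℕ) (ε : ℕ → ℕ) : Prop :=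
  (∀ j, ε j ≤ 1) ∧
  (∀ j, ¬ (∀ i, i < m → ε (j + i) = 1)) ∧
  (∃ J, (∀ j, J ≤ j → ε j = 0) ∧ n = ∑ j ∈ Finset.range J, ε j * F m j)

/-- digits indexed by `ℤ`, with the convention `ε_j = 0` for `j < 0`. -/
def digZ (ε : ℕ → ℕ) (j : ℤ) : ℕ := if 0 ≤ j then ε j.toNat else 0

/-- `r` is such that `ε_{k-1} = ⋯ = ε_{k-r} = 1` and `ε_{k-r-1} = 0`. -/
def RunLen (m : ℕ) (ε : ℕ → ℕ) (k r : ℕ) : Prop :=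
  r < m ∧ (∀ i : ℕ, 1 ≤ i → i ≤ r → digZ ε ((k : ℤ) - i) = 1) ∧
    digZ ε ((k : ℤ) - r - 1) = 0

/-- `φ` is the `m`-bonacci number: the real root `> 1` of `x^m = x^{m-1}+⋯+x+1`. -/
def IsPhi (m : ℕ) (φ : ℝ) : Prop := 1 < φ ∧ φ ^ m = ∑ i ∈ Finset.range m, φ ^ i

/-- the `φ`-adic van der Corput value `V_φ(n) = Σ_j ε_j(n) φ^{-j-1}`. -/
noncomputable def VdC (φ : ℝ) (ε : ℕ → ℕ) : ℝ := ∑' j : ℕ, (ε j : ℝ) * φ ^ (-(j : ℤ) - 1)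

/-- `μ_k = Σ_{j=0}^{k-1} ε_{k-1-j} φ^j`. -/
noncomputable def muk (φ : ℝ) (ε : ℕ → ℕ) (k : ℕ) : ℝ :=
  ∑ j ∈ Finset.range k, (ε (k - 1 - j) : ℝ) * φ ^ j

/-- `ν_k = Σ_{j=0}^{k-1} ε_j F_j^{(m)}`. -/
noncomputable def nuk (m : ℕ) (ε : ℕ → ℕ) (k : ℕ) : ℕ := ∑ j ∈ Finset.range k, ε j * F m j

/-- The substitution `σ_m` on the alphabet `Fin m` (`0`-based; the letter `i+1`
of the paper corresponds to `i : Fin m`): `σ(i) = 1(i+1)` for `i < m`, `σ(m) = 1`. -/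
def sub {m : ℕ} (i : Fin m) : List (Fin m) :=
  if h : (i : ℕ) + 1 < m then [⟨0, i.pos⟩, ⟨(i : ℕ) + 1, h⟩] else [⟨0, i.pos⟩]

/-- extension of `σ_m` to words. -/
def subw {m : ℕ} (w : List (Fin m)) : List (Fin m) := w.flatMap sub

/-- `σ_m^k(1)`, a prefix of the infinite fixed point of `σ_m`. -/
def fixWord (m : ℕ) (k : ℕ) : List (Fin m) :=
  subw^[k] (if h : 0 < m then [⟨0, h⟩] else [])

/-- abelianization `l(w)` of a word, as a vector in `ℝ^m`. -/
noncomputable def ab {m : ℕ} (w : List (Fin m)) : Fin m → ℝ := fun i => (w.count i : ℝ)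

/-- The incidence matrix `B_m` of `σ_m`; its `(i,j)` entry is `|σ_m(j)|_i`. -/
noncomputable def B (m : ℕ) : Matrix (Fin m) (Fin m) ℝ :=
  Matrix.of fun i j => ((sub j).count i : ℝ)

/-- `u` is a right eigenvector of `B_m` for the eigenvalue `φ`. -/
def IsRightEv (m : ℕ) (φ : ℝ) (u : Fin m → ℝ) : Prop := u ≠ 0 ∧ (B m).mulVec u = φ • u

/-- `v` is a left eigenvector of `B_m` for the eigenvalue `φ`. -/
def IsLeftEv (m : ℕ) (φ : ℝ) (v : Fin m → ℝ) : Prop := v ≠ 0 ∧ (B m).vecMul v = φ • v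

/-- the projection `π_c` onto `v^⊥` along `u`. -/
noncomputable def proj {m : ℕ} (u v : Fin m → ℝ) (x : Fin m → ℝ) : Fin m → ℝ :=
  x - ((∑ i, v i * x i) / (∑ i, v i * u i)) • u

/-- the hyperplane `v^⊥ = {x : ⟨v,x⟩ = 0}`. -/
def vperp {m : ℕ} (v : Fin m → ℝ) : Set (Fin m → ℝ) := {x | ∑ i, v i * x i = 0}

/-- standard basis vector `e_{i+1}` of `ℝ^m`. -/
def stdb {m : ℕ} (i : Fin m) : Fin m → ℝ := Pi.single i 1

/-- the first standard basis vector `e_1` of `ℝ^m`. -/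
def e1 (m : ℕ) : Fin m → ℝ := fun j => if (j : ℕ) = 0 then 1 else 0

/-- the lattice `L_m = ⟨π_c(e_1-e_2),…,π_c(e_1-e_m)⟩_ℤ`. -/
def latt {m : ℕ} (u v : Fin m → ℝ) : AddSubgroup (Fin m → ℝ) :=
  AddSubgroup.closure {x | ∃ i : Fin m, (i : ℕ) ≠ 0 ∧ x = proj u v (e1 m - stdb i)}

/-- a fundamental mesh of the lattice `L_m`. -/
def mesh {m : ℕ} (u v : Fin m → ℝ) : Set (Fin m → ℝ) :=
  {x | ∃ t : Fin m → ℝ, (∀ i, 0 ≤ t i ∧ t i < 1) ∧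
    x = ∑ i ∈ Finset.univ.filter (fun i : Fin m => (i : ℕ) ≠ 0),
      t i • proj u v (e1 m - stdb i)}

/-- the Lebesgue measure `λ_v` on `v^⊥`, normalized so that a fundamental mesh of
`L_m` has measure `1` (realized as normalized `(m-1)`-dimensional Hausdorff measure). -/
noncomputable def lamv (m : ℕ) (u v : Fin m → ℝ) : Measure (Fin m → ℝ) :=
  (μH[(m : ℝ) - 1] (mesh u v))⁻¹ • μH[(m : ℝ) - 1]

/-- the subtile `R_m(i)` of the Rauzy fractal. -/
noncomputable def Rtile {m : ℕ} (u v : Fin m → ℝ) (i : Fin m) : Set (Fin m → ℝ) :=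
  closure {x | ∃ (k : ℕ) (p s : List (Fin m)),
    fixWord m k = p ++ i :: s ∧ x = proj u v (ab p)}

/-- the Rauzy fractal `R_m` of `σ_m`. -/
noncomputable def Rfrac {m : ℕ} (u v : Fin m → ℝ) : Set (Fin m → ℝ) :=
  closure {x | ∃ (k : ℕ) (p s : List (Fin m)),
    fixWord m k = p ++ s ∧ x = proj u v (ab p)}

/-- interior of `A` relative to the subspace `V`. -/
def relInterior {X : Type*} [TopologicalSpace X] (V A : Set X) : Set X :=
  Subtype.val '' interior (Subtype.val ⁻¹' A : Set V)

/-- boundary of `A` relative to the subspace `V`. -/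
def relFrontier {X : Type*} [TopologicalSpace X] (V A : Set X) : Set X :=
  Subtype.val '' frontier (Subtype.val ⁻¹' A : Set V)

/-- minimal number of sets of diameter `≤ δ` needed to cover `A`. -/
noncomputable def coverNum {X : Type*} [PseudoMetricSpace X] (A : Set X) (δ : ℝ) : ℕ :=
  sInf {n : ℕ | ∃ f : Fin n → Set X, (∀ i, Metric.diam (f i) ≤ δ) ∧ A ⊆ ⋃ i, f i}

/-- the (upper) box counting dimension. -/
noncomputable def dimB {X : Type*} [PseudoMetricSpace X] (A : Set X) : ℝ :=
  Filter.limsup (fun δ : ℝ => Real.log (coverNum A δ) / Real.log (1 / δ))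
    (nhdsWithin 0 (Set.Ioi 0))

/-- the one-dimensional star discrepancy `D_N`. -/
noncomputable def starDisc1 (y : ℕ → ℝ) (N : ℕ) : ℝ :=
  sSup {d : ℝ | ∃ ω : ℝ, 0 < ω ∧ ω ≤ 1 ∧
    d = |(∑ n ∈ Finset.range N,
        Set.indicator (Set.Ico 0 ω) (fun _ => (1 : ℝ)) (y n)) / N - ω|}

/-- the `s`-dimensional star discrepancy `D_N`. -/
noncomputable def starDisc {s : ℕ} (y : ℕ → Fin s → ℝ) (N : ℕ) : ℝ :=
  sSup {d : ℝ | ∃ ω : Fin s → ℝ, (∀ i, 0 < ω i ∧ ω i ≤ 1) ∧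
    d = |(∑ n ∈ Finset.range N,
        Set.indicator (Set.univ.pi fun i => Set.Ico (0 : ℝ) (ω i)) (fun _ => (1 : ℝ)) (y n)) / N -
      ∏ i, ω i|}

/-- `i_0 →^{p_0} i_1 →^{p_1} ⋯ →^{p_{k-1}} i_k` is a walk of length `k` in the
prefix-suffix graph `G_{σ_m}`: for each step there is an edge from `i_t` to
`i_{t+1}` labelled `(p_t, i_t, s_t)`, i.e. `σ_m(i_{t+1}) = p_t i_t s_t`. -/
def IsWalk {m : ℕ} (k : ℕ) (i : Fin (k + 1) → Fin m) (p : Fin k → List (Fin m)) : Prop :=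
  ∀ t : Fin k, ∃ s : List (Fin m), sub (i t.succ) = p t ++ i t.castSucc :: s

/-- the collection `S_k^{(m)}` of level-`k` subtiles
`B_m^k R_m(i_k) + π_c l(σ_m^{k-1}(p_{k-1})⋯σ_m(p_1)p_0)` of the Rauzy fractal. -/
noncomputable def levelTiles (m k : ℕ) (u v : Fin m → ℝ) : Set (Set (Fin m → ℝ)) :=
  {S | ∃ (i : Fin (k + 1) → Fin m) (p : Fin k → List (Fin m)), IsWalk k i p ∧
    S = (fun x => (B m ^ k).mulVec x +
          ∑ t : Fin k, proj u v (ab (subw^[(t : ℕ)] (p t)))) '' Rtile u v (i (Fin.last k))}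

/-- the saturation `S + L_m` of a set `S` by the lattice `L_m`. -/
def satur {m : ℕ} (u v : Fin m → ℝ) (S : Set (Fin m → ℝ)) : Set (Fin m → ℝ) :=
  {x | ∃ y ∈ S, ∃ l ∈ latt u v, x = y + l}



lemma F_def (m k : ℕ) : F m k = if k < m then 2 ^ k
    else ∑ j ∈ (Finset.range m).attach, F m (k - (j : ℕ) - 1) := by
  have : F m k = Nat.strongRecOn (motive := fun _ => ℕ) k fun k ih =>
    if h : k < m then 2 ^ k
    else ∑ j ∈ (Finset.range m).attach,
      ih (k - (j : ℕ) - 1) (by have := Finset.mem_range.mp j.2; omega) := rfl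
  rw [this, Nat.strongRecOn_eq]
  split <;> rfl

lemma F_lt {m k : ℕ} (h : k < m) : F m k = 2 ^ k := by rw [F_def]; simp [h]

lemma F_ge {m k : ℕ} (h : m ≤ k) : F m k = ∑ i ∈ Finset.range m, F m (k - i - 1) := by
  rw [F_def, if_neg (by omega)]
  exact Finset.sum_attach (Finset.range m) (fun i => F m (k - i - 1))

lemma F_add {m : ℕ} (hm : 1 ≤ m) (q : ℕ) : F m (q + m) = ∑ i ∈ Finset.range m, F m (q + i) := by
  rw [F_ge (by omega), ← Finset.sum_range_reflect]
  apply Finset.sum_congr rfl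
  intro i hi
  congr 1
  have := Finset.mem_range.mp hi; omega

lemma F_pos {m : ℕ} (hm : 1 ≤ m) (k : ℕ) : 0 < F m k := by
  induction k using Nat.strong_induction_on with
  | _ k ih =>
    by_cases h : k < m
    · rw [F_lt h]; positivity
    · rw [F_ge (by omega)]
      refine Finset.sum_pos (fun i hi => ih _ (by have := Finset.mem_range.mp hi; omega))
        ⟨0, Finset.mem_range.mpr hm⟩

lemma F_mono {m : ℕ} (hm : 1 ≤ m) : Monotone (F m) := by
  apply monotone_nat_of_le_succ
  intro k
  by_cases h : k + 1 < m
  · rw [F_lt (by omega), F_lt h]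
    exact Nat.pow_le_pow_right (by omega) (by omega)
  · rw [F_ge (m := m) (k := k + 1) (by omega)]
    calc F m k = F m (k + 1 - 0 - 1) := by norm_num
    _ ≤ _ := Finset.single_le_sum (f := fun i => F m (k + 1 - i - 1))
        (fun i _ => Nat.zero_le _) (Finset.mem_range.mpr hm)

lemma two_pow_sum (c : ℕ) : (∑ i ∈ Finset.range c, 2 ^ i) + 1 = 2 ^ c := by
  induction c with
  | zero => simp
  | succ c ih => rw [Finset.sum_range_succ, pow_succ]; omega

section Phi
variable {m : ℕ} {φ : ℝ}

lemma phi_pos (h : IsPhi m φ) : 0 < φ := lt_trans one_pos h.1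

lemma phi_add (h : IsPhi m φ) (q : ℕ) : φ ^ (q + m) = ∑ i ∈ Finset.range m, φ ^ (q + i) := by
  rw [add_comm q m, pow_add, h.2, Finset.sum_mul]
  apply Finset.sum_congr rfl
  intro i _
  rw [← pow_add]; ring_nf

lemma phi_lt_two (h : IsPhi m φ) : φ < 2 := by
  have h1 : (1:ℝ) < φ := h.1
  have hgs : (∑ i ∈ Finset.range m, φ ^ i) * (φ - 1) = φ ^ m - 1 := geom_sum_mul φ m
  rw [← h.2] at hgs
  nlinarith [pow_pos (lt_trans one_pos h1) m]

lemma geom_lt (h : IsPhi m φ) {r : ℕ} (hr : r < m) :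
    ∑ i ∈ Finset.range r, φ ^ i < φ ^ r := by
  have h1 : (1:ℝ) < φ := h.1
  have h2 : φ < 2 := phi_lt_two h
  have hgs : (∑ i ∈ Finset.range r, φ ^ i) * (φ - 1) = φ ^ r - 1 := geom_sum_mul φ r
  have hgm : (∑ i ∈ Finset.range m, φ ^ i) * (φ - 1) = φ ^ m - 1 := geom_sum_mul φ m
  rw [← h.2] at hgm
  have e1 : φ ^ m * (2 - φ) = 1 := by linear_combination -hgm
  have hrm : φ ^ r < φ ^ m := pow_lt_pow_right₀ h1 hr
  have e2 : φ ^ r * (2 - φ) < 1 := by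
    calc φ ^ r * (2 - φ) < φ ^ m * (2 - φ) := by
          apply mul_lt_mul_of_pos_right hrm; linarith
    _ = 1 := e1
  nlinarith [hgs]

end Phi





noncomputable def fval (m : ℕ) (b : ℕ → ℕ) (K : ℕ) : ℕ := ∑ j ∈ Finset.range K, b j * F m j
noncomputable def pval (φ : ℝ) (b : ℕ → ℕ) (K : ℕ) : ℝ := ∑ j ∈ Finset.range K, (b j : ℝ) * φ ^ j

def Bin (b : ℕ → ℕ) : Prop := ∀ j, b j ≤ 1
def NoRun (m : ℕ) (b : ℕ → ℕ) : Prop := ∀ j, ¬ ∀ i, i < m → b (j + i) = 1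

lemma sum_range_split {M : Type*} [AddCommMonoid M] (f : ℕ → M) {a K : ℕ} (h : a ≤ K) :
    ∑ j ∈ Finset.range K, f j
      = (∑ j ∈ Finset.range a, f j) + ∑ i ∈ Finset.range (K - a), f (a + i) := by
  have h1 := Finset.sum_Ico_consecutive f (Nat.zero_le a) h
  have h2 := Finset.sum_Ico_eq_sum_range (f := f) (m := a) (n := K)
  rw [Finset.range_eq_Ico, ← h1, h2, ← Finset.range_eq_Ico]

lemma fval_succ (m : ℕ) (b : ℕ → ℕ) (n : ℕ) :
    fval m b (n + 1) = fval m b n + b n * F m n := Finset.sum_range_succ _ _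

lemma blocksum_le {m K c : ℕ} (hm : 1 ≤ m) (hc : c ≤ m) (hcK : c ≤ K) :
    ∑ i ∈ Finset.range c, F m (K - c + i) ≤ F m K := by
  by_cases hK : m ≤ K
  · have h1 : ∑ i ∈ Finset.range c, F m (K - c + i)
        = ∑ i ∈ Finset.Ico (m - c) m, F m (K - m + i) := by
      rw [Finset.sum_Ico_eq_sum_range]
      have hmc : m - (m - c) = c := by omega
      rw [hmc]
      exact Finset.sum_congr rfl (fun i _ => by congr 1; omega)
    rw [h1]
    calc ∑ i ∈ Finset.Ico (m - c) m, F m (K - m + i)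
        ≤ ∑ i ∈ Finset.range m, F m (K - m + i) := by
          apply Finset.sum_le_sum_of_subset
          rw [Finset.range_eq_Ico]
          exact Finset.Ico_subset_Ico (by omega) le_rfl
    _ = F m (K - m + m) := (F_add hm _).symm
    _ = F m K := by have h9 : K - m + m = K := by omega
                    rw [h9]
  · push_neg at hK
    have h1 : ∑ i ∈ Finset.range c, F m (K - c + i)
        = 2 ^ (K - c) * ∑ i ∈ Finset.range c, 2 ^ i := by
      rw [Finset.mul_sum]
      apply Finset.sum_congr rfl
      intro i hi
      have hi' := Finset.mem_range.mp hi
      rw [F_lt (by omega), ← pow_add]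
    have hab : 2 ^ (K - c) * 2 ^ c = 2 ^ K := by rw [← pow_add]; congr 1; omega
    have hS := two_pow_sum c
    have hpos : 0 < 2 ^ (K - c) := Nat.pow_pos (by omega)
    have hstep : 2 ^ (K - c) * ∑ i ∈ Finset.range c, 2 ^ i
        < 2 ^ (K - c) * ((∑ i ∈ Finset.range c, 2 ^ i) + 1) :=
      mul_lt_mul_of_pos_left (by omega) hpos
    have : 2 ^ (K - c) * ((∑ i ∈ Finset.range c, 2 ^ i) + 1) = F m K := by
      rw [hS, hab, F_lt hK]
    omega

lemma keyIneq {m : ℕ} (hm : 1 ≤ m) {b : ℕ → ℕ} (hb : Bin b) (hnr : NoRun m b) :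
    ∀ K, fval m b K < F m K := by
  intro K
  induction K using Nat.strong_induction_on with
  | _ K ih =>
  rcases Nat.eq_zero_or_pos K with h0 | h0
  · subst h0
    simp [fval]
    rw [F_lt (by omega)]
    positivity
  by_cases htop : b (K - 1) = 0
  · have h1 : fval m b K = fval m b (K - 1) := by
      have hK : K = (K - 1) + 1 := by omega
      rw [hK] at htop ⊢
      rw [fval_succ, Nat.add_sub_cancel] at *
      rw [htop]; simp
    rw [h1]
    calc fval m b (K - 1) < F m (K - 1) := ih _ (by omega)
    _ ≤ F m K := F_mono hm (by omega)
  · have hb1 : b (K - 1) = 1 := by have := hb (K - 1); omega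
    have hex : ∃ i, ¬(i < K ∧ b (K - 1 - i) = 1) := ⟨K, fun h => absurd h.1 (lt_irrefl K)⟩
    set s := Nat.find hex with hs_def
    have hs_spec : ¬(s < K ∧ b (K - 1 - s) = 1) := Nat.find_spec hex
    have hs_min : ∀ i, i < s → i < K ∧ b (K - 1 - i) = 1 := fun i hi =>
      of_not_not (Nat.find_min hex hi)
    have hs_pos : 1 ≤ s := by
      rcases Nat.eq_zero_or_pos s with h | h
      · exfalso
        rw [h] at hs_spec
        exact hs_spec ⟨h0, by simpa using hb1⟩
      · exact h
    have hsK : s ≤ K := by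
      by_contra h
      exact absurd (hs_min K (by omega)).1 (lt_irrefl K)
    have hsm : s < m := by
      by_contra h
      push_neg at h
      have hmK : m - 1 < K := (hs_min (m - 1) (by omega)).1
      apply hnr (K - m)
      intro i hi
      have h2 := (hs_min (m - 1 - i) (by omega)).2
      have heq : K - 1 - (m - 1 - i) = K - m + i := by omega
      rwa [heq] at h2
    rcases eq_or_lt_of_le hsK with hsK' | hsK'
    · have hKm : K < m := by omega
      rw [F_lt hKm]
      have hall : ∀ j, j < K → b j = 1 := by
        intro j hj
        have h2 := (hs_min (K - 1 - j) (by omega)).2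
        have heq : K - 1 - (K - 1 - j) = j := by omega
        rwa [heq] at h2
      have h3 : fval m b K = ∑ j ∈ Finset.range K, 2 ^ j := by
        apply Finset.sum_congr rfl
        intro j hj
        have hj' := Finset.mem_range.mp hj
        rw [hall j hj', F_lt (by omega), one_mul]
      rw [h3]
      have := two_pow_sum K
      omega
    · have hz : b (K - 1 - s) = 0 := by
        have := hb (K - 1 - s)
        omega
      have hsplit : fval m b K = fval m b (K - s)
          + ∑ i ∈ Finset.range s, b (K - s + i) * F m (K - s + i) := by
        have h4 := sum_range_split (fun j => b j * F m j) (a := K - s) (K := K) (by omega)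
        have h5 : K - (K - s) = s := by omega
        rw [h5] at h4
        exact h4
      have hlow : fval m b (K - s) = fval m b (K - s - 1) := by
        have hKs : K - s = (K - s - 1) + 1 := by omega
        rw [hKs, fval_succ]
        have h6 : K - s - 1 = K - 1 - s := by omega
        rw [h6, hz]
        simp
      have htopb : ∑ i ∈ Finset.range s, b (K - s + i) * F m (K - s + i)
          ≤ ∑ i ∈ Finset.range s, F m (K - s + i) := by
        apply Finset.sum_le_sum
        intro i _
        calc b (K - s + i) * F m (K - s + i) ≤ 1 * F m (K - s + i) :=
          Nat.mul_le_mul_right _ (hb _)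
        _ = _ := one_mul _
      have hlt : fval m b (K - s - 1) < F m (K - s - 1) := ih _ (by omega)
      have hfin : F m (K - s - 1) + ∑ i ∈ Finset.range s, F m (K - s + i)
          = ∑ i ∈ Finset.range (s + 1), F m (K - (s + 1) + i) := by
        rw [Finset.sum_range_succ']
        have h7 : K - (s + 1) + 0 = K - s - 1 := by omega
        rw [h7, add_comm]
        congr 1
        exact Finset.sum_congr rfl (fun i _ => by congr 1; omega)
      have hbs := blocksum_le (c := s + 1) (K := K) hm (by omega) (by omega)
      omega





lemma fval_ext {m : ℕ} {b : ℕ → ℕ} {J K : ℕ} (hJ : ∀ j, J ≤ j → b j = 0) (h : J ≤ K) :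
    fval m b K = fval m b J := by
  rw [fval, fval, sum_range_split (fun j => b j * F m j) h]
  have h1 : ∑ i ∈ Finset.range (K - J), b (J + i) * F m (J + i) = 0 := by
    apply Finset.sum_eq_zero
    intro i _
    rw [hJ (J + i) (by omega)]
    simp
  rw [h1, add_zero]

lemma digits_eq {m : ℕ} (hm : 1 ≤ m) {b b' : ℕ → ℕ} (hb : Bin b) (hb' : Bin b')
    (hnr : NoRun m b) (hnr' : NoRun m b') :
    ∀ M, fval m b M = fval m b' M → ∀ j, j < M → b j = b' j := by
  intro M
  induction M with
  | zero => intro _ j hj; omega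
  | succ M ih =>
    intro h j hj
    rw [fval_succ, fval_succ] at h
    have hM : b M = b' M := by
      by_contra hne
      rcases Nat.lt_or_ge (b M) (b' M) with hlt | hge
      · have h1 : b M = 0 := by have := hb M; have := hb' M; omega
        have h2 : b' M = 1 := by have := hb' M; omega
        have h3 := keyIneq hm hb hnr M
        rw [h1, h2] at h
        omega
      · have hlt : b' M < b M := by omega
        have h1 : b' M = 0 := by have := hb M; have := hb' M; omega
        have h2 : b M = 1 := by have := hb M; omega
        have h3 := keyIneq hm hb' hnr' M
        rw [h1, h2] at h
        omega
    rcases Nat.lt_or_ge j M with hj' | hj'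
    · exact ih (by rw [hM] at h; omega) j hj'
    · have : j = M := by omega
      rw [this]; exact hM

lemma greedy_unique {m n : ℕ} (hm : 1 ≤ m) {d d' : ℕ → ℕ}
    (h : IsGreedy m n d) (h' : IsGreedy m n d') : d = d' := by
  obtain ⟨hb, hnr, J, hJ, hv⟩ := h
  obtain ⟨hb', hnr', J', hJ', hv'⟩ := h'
  funext j
  set M := max J J' + (j + 1) with hM
  have e1 : fval m d M = n := by
    rw [fval_ext hJ (by omega)]; exact hv.symm
  have e2 : fval m d' M = n := by
    rw [fval_ext hJ' (by omega)]; exact hv'.symm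
  exact digits_eq hm hb hb' hnr hnr' M (by rw [e1, e2]) j (by omega)






def FullB (m : ℕ) (b : ℕ → ℕ) (r p : ℕ) : Prop := ∀ i, i < m → 1 ≤ i → b (r + p * m + i) = 1

noncomputable def rhoF (b : ℕ → ℕ) : ℕ := sInf {j | b j = 0}

noncomputable def tFb (m : ℕ) (b : ℕ → ℕ) : ℕ := sInf {p | ¬ FullB m b (rhoF b) p}

def stepw (b : ℕ → ℕ) (q : ℕ) : ℕ → ℕ := fun j => if j < q then 0 else if j = q then 1 else b j

noncomputable def nextw (m : ℕ) (b : ℕ → ℕ) : ℕ → ℕ := stepw b (rhoF b + tFb m b * m)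

noncomputable def ew (m : ℕ) : ℕ → ℕ → ℕ
  | 0 => fun _ => 0
  | t + 1 => nextw m (ew m t)

noncomputable def lenf (m : ℕ) (φ : ℝ) (b : ℕ → ℕ) : ℝ :=
  φ ^ (rhoF b) - ∑ i ∈ Finset.range (rhoF b), φ ^ i

lemma pval_succ (φ : ℝ) (b : ℕ → ℕ) (n : ℕ) :
    pval φ b (n + 1) = pval φ b n + (b n : ℝ) * φ ^ n := Finset.sum_range_succ _ _

section Step
variable {m k : ℕ} {b : ℕ → ℕ}

-- telescoping for fval
lemma tele_fval (hm : 1 ≤ m) {r : ℕ} (hrm : r < m) (hrun : ∀ i, i < r → b i = 1) :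
    ∀ t, (∀ p, p < t → FullB m b r p) → (∀ p, p ≤ t → b (r + p * m) = 0) →
    fval m b (r + t * m + 1) + 1 = F m (r + t * m) := by
  intro t
  induction t with
  | zero =>
    intro _ hz
    have hz0 : b r = 0 := by simpa using hz 0 (le_refl 0)
    simp only [Nat.zero_mul, Nat.add_zero]
    rw [fval_succ, hz0, Nat.zero_mul, Nat.add_zero]
    have h1 : fval m b r = ∑ j ∈ Finset.range r, 2 ^ j := by
      apply Finset.sum_congr rfl
      intro j hj
      have hj' := Finset.mem_range.mp hj
      rw [hrun j hj', F_lt (by omega), one_mul]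
    rw [h1, F_lt hrm, two_pow_sum]
  | succ t ih =>
    intro hfull hz
    have ih' := ih (fun p hp => hfull p (by omega)) (fun p hp => hz p (by omega))
    set q' := r + t * m with hq'
    have hq : r + (t + 1) * m = q' + m := by rw [Nat.succ_mul, hq']; ring
    rw [hq]
    have hKa : q' + m + 1 - (q' + 1) = m := by omega
    have hsplit : fval m b (q' + m + 1) = fval m b (q' + 1)
        + ∑ i ∈ Finset.range m, b (q' + 1 + i) * F m (q' + 1 + i) := by
      have h := sum_range_split (fun j => b j * F m j) (a := q' + 1) (K := q' + m + 1) (by omega)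
      rw [hKa] at h
      exact h
    have hA : ∑ i ∈ Finset.range m, b (q' + 1 + i) * F m (q' + 1 + i)
        + F m q' = F m (q' + m) := by
      obtain ⟨m', rfl⟩ : ∃ m', m = m' + 1 := ⟨m - 1, by omega⟩
      rw [Finset.sum_range_succ]
      have hlast : b (q' + 1 + m') = 0 := by
        have := hz (t + 1) (le_refl _)
        have he : r + (t + 1) * (m' + 1) = q' + 1 + m' := by
          rw [Nat.succ_mul, hq']; ring
        rwa [he] at this
      rw [hlast, Nat.zero_mul, Nat.add_zero]
      have hones : ∑ i ∈ Finset.range m', b (q' + 1 + i) * F (m' + 1) (q' + 1 + i)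
          = ∑ i ∈ Finset.range m', F (m' + 1) (q' + 1 + i) := by
        apply Finset.sum_congr rfl
        intro i hi
        have hi' := Finset.mem_range.mp hi
        have h1 : b (r + t * (m' + 1) + (i + 1)) = 1 :=
          hfull t (by omega) (i + 1) (by omega) (by omega)
        have he : r + t * (m' + 1) + (i + 1) = q' + 1 + i := by rw [hq']; ring
        rw [he] at h1
        rw [h1, one_mul]
      rw [hones]
      have hFA := F_add (m := m' + 1) hm q'
      rw [Finset.sum_range_succ'] at hFA
      rw [hFA]
      have he3 : ∀ i ∈ Finset.range m', F (m' + 1) (q' + 1 + i) = F (m' + 1) (q' + (i + 1)) := by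
        intro i _; congr 1 <;> omega
      rw [Finset.sum_congr rfl he3]
      simp only [Nat.add_zero]
    rw [hsplit]
    omega

-- telescoping for pval
lemma tele_pval {φ : ℝ} (hphi : IsPhi m φ) {r : ℕ} (hrm : r < m) (hrun : ∀ i, i < r → b i = 1) :
    ∀ t, (∀ p, p < t → FullB m b r p) → (∀ p, p ≤ t → b (r + p * m) = 0) →
    pval φ b (r + t * m + 1) = φ ^ (r + t * m) - φ ^ r + ∑ i ∈ Finset.range r, φ ^ i := by
  have hm : 1 ≤ m := by
    rcases Nat.eq_zero_or_pos m with h | h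
    · exfalso; have h2 := hphi.2; rw [h] at h2; simp at h2
    · exact h
  intro t
  induction t with
  | zero =>
    intro _ hz
    have hz0 : b r = 0 := by simpa using hz 0 (le_refl 0)
    simp only [Nat.zero_mul, Nat.add_zero]
    rw [pval_succ, hz0]
    have h1 : pval φ b r = ∑ j ∈ Finset.range r, φ ^ j := by
      apply Finset.sum_congr rfl
      intro j hj
      have hj' := Finset.mem_range.mp hj
      rw [hrun j hj']
      norm_num
    rw [h1]
    push_cast
    ring
  | succ t ih =>
    intro hfull hz
    have ih' := ih (fun p hp => hfull p (by omega)) (fun p hp => hz p (by omega))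
    set q' := r + t * m with hq'
    have hq : r + (t + 1) * m = q' + m := by rw [Nat.succ_mul, hq']; ring
    rw [hq]
    have hKa : q' + m + 1 - (q' + 1) = m := by omega
    have hsplit : pval φ b (q' + m + 1) = pval φ b (q' + 1)
        + ∑ i ∈ Finset.range m, (b (q' + 1 + i) : ℝ) * φ ^ (q' + 1 + i) := by
      have h := sum_range_split (fun j => (b j : ℝ) * φ ^ j) (a := q' + 1) (K := q' + m + 1) (by omega)
      rw [hKa] at h
      exact h
    have hA : ∑ i ∈ Finset.range m, (b (q' + 1 + i) : ℝ) * φ ^ (q' + 1 + i)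
        + φ ^ q' = φ ^ (q' + m) := by
      obtain ⟨m', rfl⟩ : ∃ m', m = m' + 1 := ⟨m - 1, by omega⟩
      rw [Finset.sum_range_succ]
      have hlast : b (q' + 1 + m') = 0 := by
        have := hz (t + 1) (le_refl _)
        have he : r + (t + 1) * (m' + 1) = q' + 1 + m' := by
          rw [Nat.succ_mul, hq']; ring
        rwa [he] at this
      rw [hlast]
      have hones : ∑ i ∈ Finset.range m', (b (q' + 1 + i) : ℝ) * φ ^ (q' + 1 + i)
          = ∑ i ∈ Finset.range m', φ ^ (q' + 1 + i) := by
        apply Finset.sum_congr rfl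
        intro i hi
        have hi' := Finset.mem_range.mp hi
        have h1 : b (r + t * (m' + 1) + (i + 1)) = 1 :=
          hfull t (by omega) (i + 1) (by omega) (by omega)
        have he : r + t * (m' + 1) + (i + 1) = q' + 1 + i := by rw [hq']; ring
        rw [he] at h1
        rw [h1]
        norm_num
      rw [hones]
      have hFA := phi_add hphi q'
      rw [Finset.sum_range_succ'] at hFA
      have he2 : ∀ i ∈ Finset.range m', φ ^ (q' + 1 + i) = φ ^ (q' + (i + 1)) := by
        intro i _; congr 1 <;> omega
      rw [Finset.sum_congr rfl he2, hFA]
      push_cast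
      ring
    rw [hsplit, ih']
    linarith [hA]

end Step




section StepMain
variable {m k : ℕ} {b : ℕ → ℕ}

lemma step_main (hm : 2 ≤ m) (hb : Bin b) (hnr : NoRun m b) (hsupp : ∀ j, k ≤ j → b j = 0) :
    rhoF b < m ∧ (∀ i, i < rhoF b → b i = 1) ∧ b (rhoF b) = 0 ∧
    rhoF b + tFb m b * m ≤ k ∧
    Bin (nextw m b) ∧ NoRun m (nextw m b) ∧
    (∀ j, k + 1 ≤ j → nextw m b j = 0) ∧
    (∀ K, rhoF b + tFb m b * m < K → fval m (nextw m b) K = fval m b K + 1) ∧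
    (∀ φ : ℝ, IsPhi m φ → ∀ K, rhoF b + tFb m b * m < K →
      pval φ (nextw m b) K = pval φ b K + lenf m φ b) := by
  have hex' : {j | b j = 0}.Nonempty := ⟨k, hsupp k le_rfl⟩
  have hr0 : b (rhoF b) = 0 := Nat.sInf_mem hex'
  have hrun : ∀ i, i < rhoF b → b i = 1 := by
    intro i hi
    have h1 : i ∉ {j | b j = 0} := Nat.notMem_of_lt_sInf hi
    simp only [Set.mem_setOf_eq] at h1
    have := hb i
    omega
  set r := rhoF b with hr_def
  have hrm : r < m := by
    by_contra h
    push_neg at h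
    exact hnr 0 (fun i hi => by simpa using hrun i (by omega))
  have hrk : r ≤ k := by
    by_contra h
    push_neg at h
    have h1 := hrun k (by omega)
    rw [hsupp k le_rfl] at h1
    omega
  have hexp : {p | ¬ FullB m b r p}.Nonempty := by
    refine ⟨k, fun hfull => ?_⟩
    have h1 := hfull 1 (by omega) (le_refl 1)
    have hkm : k ≤ k * m := Nat.le_mul_of_pos_right k (by omega)
    have h2 : b (r + k * m + 1) = 0 := hsupp _ (by omega)
    omega
  have ht0 : ¬ FullB m b r (tFb m b) := Nat.sInf_mem hexp
  have htfull : ∀ p, p < tFb m b → FullB m b r p := by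
    intro p hp
    have h1 : p ∉ {p | ¬ FullB m b r p} := Nat.notMem_of_lt_sInf hp
    simp only [Set.mem_setOf_eq, not_not] at h1
    exact h1
  set t := tFb m b with ht_def
  have hbl0 : ∀ p, p ≤ t → b (r + p * m) = 0 := by
    intro p hp
    rcases Nat.eq_zero_or_pos p with h0 | h0
    · rw [h0]; simpa using hr0
    · obtain ⟨p', rfl⟩ : ∃ p', p = p' + 1 := ⟨p - 1, by omega⟩
      by_contra hbe
      have hb1 : b (r + (p' + 1) * m) = 1 := by have := hb (r + (p' + 1) * m); omega
      apply hnr (r + p' * m + 1)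
      intro i hi
      rcases Nat.lt_or_ge i (m - 1) with hi' | hi'
      · have h1 := htfull p' (by omega) (i + 1) (by omega) (by omega)
        have he : r + p' * m + (i + 1) = r + p' * m + 1 + i := by omega
        rwa [he] at h1
      · have hieq : i = m - 1 := by omega
        subst hieq
        have he : r + p' * m + 1 + (m - 1) = r + (p' + 1) * m := by
          rw [Nat.succ_mul]; omega
        rw [he]
        exact hb1
  set q := r + t * m with hq_def
  have hqk : q ≤ k := by
    rcases Nat.eq_zero_or_pos t with h0 | h0
    · rw [hq_def, h0]; simpa using hrk
    · obtain ⟨t', ht'⟩ : ∃ t', t = t' + 1 := ⟨t - 1, by omega⟩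
      by_contra h
      push_neg at h
      have h1 : b (r + t' * m + (m - 1)) = 1 :=
        htfull t' (by omega) (m - 1) (by omega) (by omega)
      have h2 : b (r + t' * m + (m - 1)) = 0 := by
        apply hsupp
        rw [hq_def, ht'] at h
        rw [Nat.succ_mul] at h
        omega
      omega
  have hnw : nextw m b = stepw b q := rfl
  have hbin' : Bin (nextw m b) := by
    intro j
    rw [hnw]
    unfold stepw
    split
    · omega
    · split
      · omega
      · exact hb j
  have hsupp' : ∀ j, k + 1 ≤ j → nextw m b j = 0 := by
    intro j hj
    rw [hnw]
    unfold stepw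
    rw [if_neg (by omega), if_neg (by omega)]
    exact hsupp j (by omega)
  have hnr' : NoRun m (nextw m b) := by
    intro j hall
    rcases lt_trichotomy j q with h | h | h
    · have h1 := hall 0 (by omega)
      rw [hnw] at h1
      unfold stepw at h1
      rw [Nat.add_zero, if_pos h] at h1
      omega
    · subst h
      apply ht0
      intro i him hi1
      have h1 := hall i him
      rw [hnw] at h1
      unfold stepw at h1
      rw [if_neg (by omega), if_neg (by omega)] at h1
      exact h1
    · apply hnr j
      intro i hi
      have h1 := hall i hi
      rw [hnw] at h1
      unfold stepw at h1
      rw [if_neg (by omega), if_neg (by omega)] at h1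
      exact h1
  have hteleF : fval m b (q + 1) + 1 = F m q :=
    tele_fval (by omega) hrm hrun t htfull hbl0
  have hstepsum : ∀ K, q < K → fval m (nextw m b) K = F m q
      + ∑ i ∈ Finset.range (K - (q + 1)), b (q + 1 + i) * F m (q + 1 + i) := by
    intro K hK
    have hsplit : fval m (nextw m b) K = (∑ j ∈ Finset.range (q + 1), nextw m b j * F m j)
        + ∑ i ∈ Finset.range (K - (q + 1)), nextw m b (q + 1 + i) * F m (q + 1 + i) :=
      sum_range_split (fun j => nextw m b j * F m j) (by omega)
    rw [hsplit]
    congr 1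
    · have h1 : ∑ j ∈ Finset.range (q + 1), nextw m b j * F m j = nextw m b q * F m q := by
        apply Finset.sum_eq_single_of_mem q (Finset.self_mem_range_succ q)
        intro j hj hne
        have hj' := Finset.mem_range.mp hj
        rw [hnw]
        unfold stepw
        rw [if_pos (by omega)]
        omega
      rw [h1, hnw]
      unfold stepw
      rw [if_neg (by omega), if_pos rfl, one_mul]
    · apply Finset.sum_congr rfl
      intro i _
      rw [hnw]
      unfold stepw
      rw [if_neg (by omega), if_neg (by omega)]
  have hfv : ∀ K, q < K → fval m (nextw m b) K = fval m b K + 1 := by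
    intro K hK
    have h1 := hstepsum K hK
    have h2 : fval m b K = fval m b (q + 1)
        + ∑ i ∈ Finset.range (K - (q + 1)), b (q + 1 + i) * F m (q + 1 + i) :=
      sum_range_split (fun j => b j * F m j) (by omega)
    omega
  refine ⟨hrm, hrun, hr0, hqk, hbin', hnr', hsupp', hfv, ?_⟩
  intro φ hphi K hK
  have htele := tele_pval hphi hrm hrun t htfull hbl0
  have hsplit : pval φ (nextw m b) K = (∑ j ∈ Finset.range (q + 1), (nextw m b j : ℝ) * φ ^ j)
      + ∑ i ∈ Finset.range (K - (q + 1)), (nextw m b (q + 1 + i) : ℝ) * φ ^ (q + 1 + i) :=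
    sum_range_split (fun j => (nextw m b j : ℝ) * φ ^ j) (by omega)
  have h1 : ∑ j ∈ Finset.range (q + 1), (nextw m b j : ℝ) * φ ^ j = φ ^ q := by
    have h2 : ∑ j ∈ Finset.range (q + 1), (nextw m b j : ℝ) * φ ^ j
        = (nextw m b q : ℝ) * φ ^ q := by
      apply Finset.sum_eq_single_of_mem q (Finset.self_mem_range_succ q)
      intro j hj hne
      have hj' := Finset.mem_range.mp hj
      rw [hnw]
      unfold stepw
      rw [if_pos (by omega)]
      norm_num
    rw [h2, hnw]
    unfold stepw
    rw [if_neg (by omega), if_pos rfl]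
    norm_num
  have h3 : ∑ i ∈ Finset.range (K - (q + 1)), (nextw m b (q + 1 + i) : ℝ) * φ ^ (q + 1 + i)
      = ∑ i ∈ Finset.range (K - (q + 1)), (b (q + 1 + i) : ℝ) * φ ^ (q + 1 + i) := by
    apply Finset.sum_congr rfl
    intro i _
    rw [hnw]
    unfold stepw
    rw [if_neg (by omega), if_neg (by omega)]
  have h4 : pval φ b K = pval φ b (q + 1)
      + ∑ i ∈ Finset.range (K - (q + 1)), (b (q + 1 + i) : ℝ) * φ ^ (q + 1 + i) :=
    sum_range_split (fun j => (b j : ℝ) * φ ^ j) (by omega)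
  rw [hsplit, h1, h3, h4, htele, lenf, ← hr_def]
  ring

end StepMain




section Inv
variable {m k : ℕ} {φ : ℝ}

lemma top0 {w : ℕ → ℕ} (hb : Bin w) (hfv : fval m w (k + 1) < F m k) : w k = 0 := by
  by_contra h
  have hfs := fval_succ m w k
  have h2 : F m k ≤ w k * F m k := Nat.le_mul_of_pos_left _ (by have := hb k; omega)
  omega

lemma ew_inv (hm : 2 ≤ m) (hphi : IsPhi m φ) :
    ∀ t, t ≤ F m k →
      Bin (ew m t) ∧ NoRun m (ew m t) ∧ (∀ j, k + 1 ≤ j → ew m t j = 0) ∧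
      fval m (ew m t) (k + 1) = t ∧
      pval φ (ew m t) (k + 1) = ∑ s ∈ Finset.range t, lenf m φ (ew m s) := by
  intro t
  induction t with
  | zero =>
    intro _
    refine ⟨fun j => by simp [ew], fun j hall => ?_, fun j _ => rfl, ?_, ?_⟩
    · have := hall 0 (by omega); simp [ew] at this
    · simp [fval, ew]
    · simp [pval, ew]
  | succ t ih =>
    intro ht
    obtain ⟨hb, hnr, hsupp1, hfv, hpv⟩ := ih (by omega)
    have hk0 : ew m t k = 0 := top0 (m := m) (k := k) hb (by omega)
    have hsupp : ∀ j, k ≤ j → ew m t j = 0 := by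
      intro j hj
      rcases eq_or_lt_of_le hj with h | h
      · rw [← h]; exact hk0
      · exact hsupp1 j (by omega)
    obtain ⟨hrm, hrun, hr0, hqk, hbin', hnr', hsupp', hfv', hpv'⟩ :=
      step_main hm hb hnr hsupp
    have hnext : ew m (t + 1) = nextw m (ew m t) := rfl
    refine ⟨by rw [hnext]; exact hbin', by rw [hnext]; exact hnr',
      by rw [hnext]; exact hsupp', ?_, ?_⟩
    · rw [hnext, hfv' (k + 1) (by omega), hfv]
    · rw [hnext, hpv' φ hphi (k + 1) (by omega), hpv, Finset.sum_range_succ]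

lemma ew_final (hm : 2 ≤ m) (hphi : IsPhi m φ) :
    ∑ s ∈ Finset.range (F m k), lenf m φ (ew m s) = φ ^ k := by
  obtain ⟨hb, hnr, hsupp1, hfv, hpv⟩ := ew_inv (k := k) hm hphi (F m k) le_rfl
  have hk1 : ew m (F m k) k = 1 := by
    by_contra h
    have hk0 : ew m (F m k) k = 0 := by have := hb k; omega
    have h1 := fval_succ m (ew m (F m k)) k
    have h2 := keyIneq (m := m) (by omega) hb hnr k
    rw [hk0] at h1
    omega
  have hlow : ∀ j, j < k → ew m (F m k) j = 0 := by
    intro j hj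
    by_contra h
    have h1 : ew m (F m k) j * F m j ≤ fval m (ew m (F m k)) k :=
      Finset.single_le_sum (f := fun j => ew m (F m k) j * F m j)
        (fun i _ => Nat.zero_le _) (Finset.mem_range.mpr hj)
    have h2 : 1 ≤ ew m (F m k) j * F m j := by
      have h3 := F_pos (m := m) (by omega) j
      have h4 : 1 ≤ ew m (F m k) j := by omega
      calc 1 = 1 * 1 := (one_mul 1).symm
      _ ≤ _ := Nat.mul_le_mul h4 h3
    have hfs := fval_succ m (ew m (F m k)) k
    rw [hk1, one_mul] at hfs
    omega
  have hp : pval φ (ew m (F m k)) (k + 1) = φ ^ k := by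
    rw [pval_succ, hk1]
    have h0 : pval φ (ew m (F m k)) k = 0 :=
      Finset.sum_eq_zero (fun j hj => by
        rw [hlow j (Finset.mem_range.mp hj)]; norm_num)
    rw [h0]
    norm_num
  rw [← hpv, hp]

end Inv

section Rev

def revw (k : ℕ) (b : ℕ → ℕ) : ℕ → ℕ := fun j => if j < k then b (k - 1 - j) else 0

variable {m k : ℕ} {b : ℕ → ℕ}

lemma revw_bin (hb : Bin b) : Bin (revw k b) := by
  intro j
  unfold revw
  split
  · exact hb _
  · omega

lemma revw_supp : ∀ j, k ≤ j → revw k b j = 0 := by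
  intro j hj
  unfold revw
  rw [if_neg (by omega)]

lemma revw_norun (hm : 1 ≤ m) (hnr : NoRun m b) : NoRun m (revw k b) := by
  intro j hall
  have h1 : j + (m - 1) < k := by
    have := hall (m - 1) (by omega)
    by_contra h
    push_neg at h
    unfold revw at this
    rw [if_neg (by omega)] at this
    omega
  apply hnr (k - j - m)
  intro i hi
  have h2 := hall (m - 1 - i) (by omega)
  unfold revw at h2
  rw [if_pos (by omega)] at h2
  have he : k - 1 - (j + (m - 1 - i)) = k - j - m + i := by omega
  rwa [he] at h2

lemma revw_invol (hsupp : ∀ j, k ≤ j → b j = 0) : revw k (revw k b) = b := by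
  funext j
  unfold revw
  rcases Nat.lt_or_ge j k with h | h
  · rw [if_pos h, if_pos (by omega)]
    congr 1
    omega
  · rw [if_neg (by omega), hsupp j h]

end Rev

lemma union_Ico_chain {W : ℕ → ℝ} :
    ∀ N, (∀ t, t < N → W t ≤ W (t + 1)) →
      (⋃ t ∈ Finset.range N, Set.Ico (W t) (W (t + 1))) = Set.Ico (W 0) (W N) := by
  intro N
  induction N with
  | zero => intro _; simp
  | succ N ih =>
    intro hW
    have hmono : W 0 ≤ W N := by
      clear ih
      induction N with
      | zero => exact le_rfl
      | succ N ih2 =>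
        exact le_trans (ih2 (fun t ht => hW t (by omega))) (hW N (by omega))
    rw [Finset.range_add_one]
    rw [Finset.set_biUnion_insert]
    rw [ih (fun t ht => hW t (by omega))]
    rw [Set.union_comm, Set.Ico_union_Ico_eq_Ico hmono (hW N (by omega))]


/-- Lemma 3.3: the collection of intervals
`I(n) = [μ_k(n)/φ^k, (μ_k(n)+φ^{r(n)}-Σ_{i<r(n)}φ^i)/φ^k)`, `0 ≤ n < F_k^{(m)}`,
forms a partition of `[0,1)`. -/
theorem stmt3 (m : ℕ) (hm : 2 ≤ m) (k : ℕ) (φ : ℝ) (hφ : IsPhi m φ)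
    (ε : ℕ → ℕ → ℕ) (hε : ∀ n, IsGreedy m n (ε n))
    (r : ℕ → ℕ) (hr : ∀ n, n < F m k → RunLen m (ε n) k (r n)) :
    (∀ n n', n < F m k → n' < F m k → n ≠ n' →
      Disjoint
        (Set.Ico (muk φ (ε n) k / φ ^ k)
          ((muk φ (ε n) k + φ ^ (r n) - ∑ i ∈ Finset.range (r n), φ ^ i) / φ ^ k))
        (Set.Ico (muk φ (ε n') k / φ ^ k)
          ((muk φ (ε n') k + φ ^ (r n') - ∑ i ∈ Finset.range (r n'), φ ^ i) / φ ^ k))) ∧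
    (⋃ n ∈ Finset.range (F m k),
        Set.Ico (muk φ (ε n) k / φ ^ k)
          ((muk φ (ε n) k + φ ^ (r n) - ∑ i ∈ Finset.range (r n), φ ^ i) / φ ^ k)) =
      Set.Ico (0 : ℝ) 1 := by
  have hm1 : (1:ℕ) ≤ m := by omega
  set N := F m k with hN
  have hφpos : 0 < φ := phi_pos hφ
  have hφk : (0:ℝ) < φ ^ k := pow_pos hφpos k
  set V : ℕ → ℝ := fun t => ∑ s ∈ Finset.range t, lenf m φ (ew m s) with hV
  have hinv : ∀ t, t ≤ N → Bin (ew m t) ∧ NoRun m (ew m t)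
      ∧ (∀ j, k + 1 ≤ j → ew m t j = 0)
      ∧ fval m (ew m t) (k + 1) = t ∧ pval φ (ew m t) (k + 1) = V t :=
    fun t ht => ew_inv hm hφ t ht
  have hsuppk : ∀ t, t < N → ∀ j, k ≤ j → ew m t j = 0 := by
    intro t ht j hj
    obtain ⟨hb, hnr, hs1, hfv, _⟩ := hinv t (by omega)
    rcases eq_or_lt_of_le hj with h | h
    · rw [← h]; exact top0 (m := m) (k := k) hb (by omega)
    · exact hs1 j (by omega)
  have hlen : ∀ t, t < N → 0 < lenf m φ (ew m t) := by
    intro t ht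
    obtain ⟨hb, hnr, _, _, _⟩ := hinv t (by omega)
    obtain ⟨hrm, -, -, -, -, -, -, -, -⟩ := step_main hm hb hnr (hsuppk t ht)
    rw [lenf]
    have := geom_lt hφ hrm
    linarith
  have hVsucc : ∀ t, V (t + 1) = V t + lenf m φ (ew m t) :=
    fun t => Finset.sum_range_succ _ _
  have hVle : ∀ a b, a ≤ b → b ≤ N → V a ≤ V b := by
    intro a b hab hbN
    apply Finset.sum_le_sum_of_subset_of_nonneg (Finset.range_subset_range.mpr hab)
    intro s hs hns
    have hsN : s < N := by have := Finset.mem_range.mp hs; omega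
    exact le_of_lt (hlen s hsN)
  have hVN : V N = φ ^ k := ew_final hm hφ
  have hnt : ∀ t, t < N → fval m (revw k (ew m t)) k < N
      ∧ IsGreedy m (fval m (revw k (ew m t)) k) (revw k (ew m t)) := by
    intro t ht
    obtain ⟨hb, hnr, -, -, -⟩ := hinv t (by omega)
    have hbr : Bin (revw k (ew m t)) := revw_bin hb
    have hnrr : NoRun m (revw k (ew m t)) := revw_norun hm1 hnr
    exact ⟨keyIneq hm1 hbr hnrr k, hbr, hnrr, k, revw_supp, rfl⟩
  have hepst : ∀ t, t < N → ε (fval m (revw k (ew m t)) k) = revw k (ew m t) :=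
    fun t ht => greedy_unique hm1 (hε _) (hnt t ht).2
  have hinj : ∀ t t', t < N → t' < N →
      fval m (revw k (ew m t)) k = fval m (revw k (ew m t')) k → t = t' := by
    intro t t' ht ht' h
    have h1 : revw k (ew m t) = revw k (ew m t') := by
      rw [← hepst t ht, ← hepst t' ht', h]
    have h2 : ew m t = ew m t' := by
      rw [← revw_invol (hsuppk t ht), ← revw_invol (hsuppk t' ht'), h1]
    have h3 := (hinv t (by omega)).2.2.2.1
    have h4 := (hinv t' (by omega)).2.2.2.1
    rw [h2] at h3
    omega
  have hsurj : ∀ n, n < N → ∃ t, t < N ∧ fval m (revw k (ew m t)) k = n := by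
    have hNpos : 0 < N := F_pos hm1 k
    have hgi : Function.Injective
        (fun t : Fin N => (⟨fval m (revw k (ew m t)) k, (hnt t t.2).1⟩ : Fin N)) := by
      intro t t' h
      exact Fin.ext (hinj t t' t.2 t'.2 (by simpa using congrArg Fin.val h))
    have hgs := Finite.surjective_of_injective hgi
    intro n hn
    obtain ⟨t, htt⟩ := hgs ⟨n, hn⟩
    exact ⟨t, t.2, by simpa using congrArg Fin.val htt⟩
  have hmain : ∀ n, n < N → ∃ t, t < N ∧ fval m (revw k (ew m t)) k = n ∧
      muk φ (ε n) k = V t ∧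
      (φ ^ (r n) - ∑ i ∈ Finset.range (r n), φ ^ i) = lenf m φ (ew m t) := by
    intro n hn
    obtain ⟨t, ht, hfn⟩ := hsurj n hn
    have heps : ε n = revw k (ew m t) := by rw [← hfn]; exact hepst t ht
    refine ⟨t, ht, hfn, ?_, ?_⟩
    · have h1 : muk φ (ε n) k = pval φ (ew m t) k := by
        apply Finset.sum_congr rfl
        intro j hj
        have hj' := Finset.mem_range.mp hj
        rw [heps]
        unfold revw
        rw [if_pos (by omega)]
        have he : k - 1 - (k - 1 - j) = j := by omega
        rw [he]
      have hk0 : ew m t k = 0 := hsuppk t ht k le_rfl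
      have h2 := pval_succ φ (ew m t) k
      have h3 := (hinv t (by omega)).2.2.2.2
      rw [hk0] at h2
      push_cast at h2
      rw [h1]
      linarith [h2, h3]
    · obtain ⟨hb, hnr, -, -, -⟩ := hinv t (by omega)
      obtain ⟨hrm, hrun, hr0, -, -, -, -, -, -⟩ := step_main hm hb hnr (hsuppk t ht)
      obtain ⟨hrnm, hrn1, hrn0⟩ := hr n hn
      have hrnk : r n ≤ k := by
        by_contra h
        push_neg at h
        have h1 := hrn1 (k + 1) (by omega) (by omega)
        unfold digZ at h1
        rw [if_neg (by omega)] at h1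
        omega
      have hone : ∀ i, i < r n → ew m t i = 1 := by
        intro i hi
        have h1 := hrn1 (i + 1) (by omega) (by omega)
        unfold digZ at h1
        rw [if_pos (by omega)] at h1
        have he : ((k : ℤ) - (↑(i + 1) : ℕ)).toNat = k - 1 - i := by omega
        rw [he, heps] at h1
        unfold revw at h1
        rw [if_pos (by omega)] at h1
        have he2 : k - 1 - (k - 1 - i) = i := by omega
        rwa [he2] at h1
      have hzero : ew m t (r n) = 0 := by
        rcases eq_or_lt_of_le hrnk with h | h
        · rw [h]; exact hsuppk t ht k le_rfl
        · have h1 := hrn0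
          unfold digZ at h1
          rw [if_pos (by omega)] at h1
          have he : ((k : ℤ) - (r n) - 1).toNat = k - 1 - (r n) := by omega
          rw [he, heps] at h1
          unfold revw at h1
          rw [if_pos (by omega)] at h1
          have he2 : k - 1 - (k - 1 - r n) = r n := by omega
          rwa [he2] at h1
      have hrho : rhoF (ew m t) = r n := by
        have hle : rhoF (ew m t) ≤ r n := Nat.sInf_le hzero
        rcases eq_or_lt_of_le hle with h | h
        · exact h
        · exfalso
          have h1 := hone _ h
          rw [hr0] at h1
          omega
      rw [lenf, hrho]
  choose tsel ht1 ht2 ht3 ht4 using hmain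
  have hIco : ∀ n (hn : n < N),
      Set.Ico (muk φ (ε n) k / φ ^ k)
        ((muk φ (ε n) k + φ ^ (r n) - ∑ i ∈ Finset.range (r n), φ ^ i) / φ ^ k)
      = Set.Ico (V (tsel n hn) / φ ^ k) (V (tsel n hn + 1) / φ ^ k) := by
    intro n hn
    have hend : (muk φ (ε n) k + φ ^ (r n) - ∑ i ∈ Finset.range (r n), φ ^ i) / φ ^ k
        = V (tsel n hn + 1) / φ ^ k := by
      rw [hVsucc, ← ht4 n hn, ht3 n hn]
      ring
    rw [hend, ht3 n hn]
  have hdisj : ∀ t t', t < t' → t' < N →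
      Disjoint (Set.Ico (V t / φ ^ k) (V (t + 1) / φ ^ k))
        (Set.Ico (V t' / φ ^ k) (V (t' + 1) / φ ^ k)) := by
    intro t t' h ht'
    have hVt : V (t + 1) ≤ V t' := hVle (t + 1) t' (by omega) (by omega)
    have hdd : V (t + 1) / φ ^ k ≤ V t' / φ ^ k := by
      exact div_le_div_of_nonneg_right hVt hφk.le
    apply Set.disjoint_left.mpr
    intro x hx hx'
    have h1 := hx.2
    have h2 := hx'.1
    linarith
  constructor
  · intro n n' hn hn' hne
    have htne : tsel n hn ≠ tsel n' hn' := by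
      intro h
      apply hne
      rw [← ht2 n hn, ← ht2 n' hn', h]
    rw [hIco n hn, hIco n' hn']
    rcases lt_or_gt_of_ne htne with h | h
    · exact hdisj _ _ h (ht1 n' hn')
    · exact (hdisj _ _ h (ht1 n hn)).symm
  · have heq : (⋃ n ∈ Finset.range N,
        Set.Ico (muk φ (ε n) k / φ ^ k)
          ((muk φ (ε n) k + φ ^ (r n) - ∑ i ∈ Finset.range (r n), φ ^ i) / φ ^ k))
        = ⋃ t ∈ Finset.range N, Set.Ico (V t / φ ^ k) (V (t + 1) / φ ^ k) := by
      apply le_antisymm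
      · refine Set.iUnion₂_subset fun n hn => ?_
        have hn' := Finset.mem_range.mp hn
        rw [hIco n hn']
        intro x hx
        exact Set.mem_biUnion (Finset.mem_range.mpr (ht1 n hn')) hx
      · refine Set.iUnion₂_subset fun t ht => ?_
        have ht' := Finset.mem_range.mp ht
        have hnN : fval m (revw k (ew m t)) k < N := (hnt t ht').1
        have hts : tsel (fval m (revw k (ew m t)) k) hnN = t :=
          hinj _ _ (ht1 _ hnN) ht' (ht2 _ hnN)
        intro x hx
        apply Set.mem_biUnion (Finset.mem_range.mpr hnN)
        rw [hIco _ hnN, hts]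
        exact hx
    rw [heq]
    have hWmono : ∀ t, t < N → V t / φ ^ k ≤ V (t + 1) / φ ^ k := by
      intro t ht
      apply div_le_div_of_nonneg_right _ hφk.le
      have := hlen t ht
      rw [hVsucc]
      linarith
    calc (⋃ t ∈ Finset.range N, Set.Ico (V t / φ ^ k) (V (t + 1) / φ ^ k))
        = Set.Ico (V 0 / φ ^ k) (V N / φ ^ k) :=
          union_Ico_chain (W := fun t => V t / φ ^ k) N hWmono
    _ = Set.Ico (0 : ℝ) 1 := by
        have e0 : V 0 = 0 := Finset.sum_range_zero _
        rw [e0, hVN, zero_div, div_self (ne_of_gt hφk)]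

end Mbon
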